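/- Bounded cancellation: Let F and G be free groups with fixed bases and let φ : F → G be an injective homomorphism. Then there exists a constant C ≥ 0 such that for all reduced words u, v in F with u·v reduced (no cancellation between u and v), the reduced form of φ(u)φ(v) satisfies |[φ(uv)]| ≥ |[φ(u)]| + |[φ(v)]| − 2C. -/

import Mathlib

namespace BCaux

open FreeGroup List

set_option linter.unusedSectionVars false

variable {β : Type*} [DecidableEq β]

/-- A word is reduced: no adjacent cancelling pair. -/
def IsRed (L : List (β × Bool)) : Prop :=
  List.Chain' (fun p q : β × Bool => ¬(p.1 = q.1 ∧ p.2 = !q.2)) L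

theorem isRed_reduce (L : List (β × Bool)) : IsRed (FreeGroup.reduce L) := by
  induction L with
  | nil => exact List.isChain_nil
  | cons h t ih =>
    rw [FreeGroup.reduce.cons]
    rcases hr : FreeGroup.reduce t with _ | ⟨h2, t2⟩
    · exact List.isChain_singleton _
    · rw [hr] at ih
      by_cases hc : h.1 = h2.1 ∧ h.2 = !h2.2
      · simp only [hc, if_true]
        exact ih.tail
      · simp only [hc, if_false]
        exact ih.cons (by simpa using hc)

theorem reduce_eq_self_of_isRed {L : List (β × Bool)} (h : IsRed L) :
    FreeGroup.reduce L = L := by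
  induction L with
  | nil => rfl
  | cons hd t ih =>
    rw [FreeGroup.reduce.cons, ih h.tail]
    cases t with
    | nil => rfl
    | cons h2 t2 =>
      have := List.isChain_cons_cons.1 h
      simp only [this.1, if_false]

theorem isRed_toWord (x : FreeGroup β) : IsRed x.toWord := by
  rw [← FreeGroup.reduce_toWord]; exact isRed_reduce _

theorem norm_mk_of_isRed {L : List (β × Bool)} (h : IsRed L) :
    (FreeGroup.mk L).norm = L.length := by
  rw [FreeGroup.norm, FreeGroup.toWord_mk, reduce_eq_self_of_isRed h]

theorem toWord_mk_of_isRed {L : List (β × Bool)} (h : IsRed L) :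
    (FreeGroup.mk L).toWord = L := by
  rw [FreeGroup.toWord_mk, reduce_eq_self_of_isRed h]

theorem isRed_infix {L L' : List (β × Bool)} (h : IsRed L) (h' : L' <:+: L) : IsRed L' :=
  List.IsChain.infix h h'

/-- No cancellation between reduced words whose heads are not equal. -/
theorem invRev_cons (p : β × Bool) (t : List (β × Bool)) :
    FreeGroup.invRev (p :: t) = FreeGroup.invRev t ++ [(p.1, !p.2)] := by
  simp [FreeGroup.invRev]

theorem isRed_invRev {L : List (β × Bool)} (h : IsRed L) : IsRed (FreeGroup.invRev L) := by
  unfold FreeGroup.invRev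
  rw [IsRed]; show List.IsChain _ _; rw [List.isChain_reverse, List.isChain_map]
  refine h.imp ?_
  intro a b hab hc
  exact hab ⟨hc.1.symm, by revert hc; cases a.2 <;> cases b.2 <;> simp⟩

theorem isRed_invRev_append {L₁ L₂ : List (β × Bool)} (h₁ : IsRed L₁) (h₂ : IsRed L₂)
    (h : ∀ h t₁ t₂, L₁ = h :: t₁ → L₂ = h :: t₂ → False) :
    IsRed (FreeGroup.invRev L₁ ++ L₂) := by
  refine List.isChain_append.2 ⟨isRed_invRev h₁, h₂, ?_⟩
  intro x hx y hy
  cases L₁ with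
  | nil => simp [FreeGroup.invRev] at hx
  | cons p t₁ =>
    cases L₂ with
    | nil => simp at hy
    | cons q t₂ =>
      rw [invRev_cons, List.getLast?_concat] at hx
      have hx' : x = (p.1, !p.2) := by exact Option.some_injective _ hx.symm
      have hy' : y = q := by simpa using hy.symm
      subst hx'
      rintro ⟨e1, e2⟩
      rw [hy'] at e1 e2
      simp only at e1 e2
      have hpq : p = q := Prod.ext e1 (Bool.not_inj e2)
      exact h p t₁ t₂ rfl (by rw [hpq])


/-! ### Metric structure -/

/-- Word distance. -/
def wdist (x y : FreeGroup β) : ℕ := (x⁻¹ * y).norm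

theorem wdist_symm (x y : FreeGroup β) : wdist x y = wdist y x := by
  rw [wdist, wdist, ← FreeGroup.norm_inv_eq]
  simp [mul_comm]

theorem wdist_self (x : FreeGroup β) : wdist x x = 0 := by simp [wdist]

theorem wdist_triangle (x y z : FreeGroup β) : wdist x z ≤ wdist x y + wdist y z := by
  have : x⁻¹ * z = (x⁻¹ * y) * (y⁻¹ * z) := by group
  rw [wdist, this]
  exact FreeGroup.norm_mul_le _ _

/-- Betweenness in the tree. -/
def WBtw (x m y : FreeGroup β) : Prop := wdist x m + wdist m y = wdist x y

/-- Positive Gromov product at the identity: common first letter. -/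
def Gp (x y : FreeGroup β) : Prop :=
  ∃ h t₁ t₂, x.toWord = h :: t₁ ∧ y.toWord = h :: t₂

theorem norm_inv_mul_of_not_gp {x y : FreeGroup β} (h : ¬ Gp x y) :
    (x⁻¹ * y).norm = x.norm + y.norm := by
  have hred : IsRed (FreeGroup.invRev x.toWord ++ y.toWord) := by
    refine isRed_invRev_append (isRed_toWord x) (isRed_toWord y) ?_
    intro a t₁ t₂ h1 h2
    exact h ⟨a, t₁, t₂, h1, h2⟩
  have : x⁻¹ * y = FreeGroup.mk (FreeGroup.invRev x.toWord ++ y.toWord) := by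
    conv_lhs => rw [← FreeGroup.mk_toWord (x := x), ← FreeGroup.mk_toWord (x := y)]
    rw [FreeGroup.inv_mk, FreeGroup.mul_mk]
  rw [this, norm_mk_of_isRed hred, List.length_append, FreeGroup.invRev_length]
  rfl

theorem norm_inv_mul_of_gp {x y : FreeGroup β} (h : Gp x y) :
    (x⁻¹ * y).norm + 2 ≤ x.norm + y.norm := by
  obtain ⟨p, t₁, t₂, h1, h2⟩ := h
  have hx : x = FreeGroup.mk (p :: t₁) := by rw [← h1, FreeGroup.mk_toWord]
  have hy : y = FreeGroup.mk (p :: t₂) := by rw [← h2, FreeGroup.mk_toWord]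
  have hxy : x⁻¹ * y = FreeGroup.mk (FreeGroup.invRev t₁ ++ t₂) := by
    rw [hx, hy, FreeGroup.inv_mk, FreeGroup.mul_mk, invRev_cons]
    have : (FreeGroup.invRev t₁ ++ [(p.1, !p.2)]) ++ p :: t₂
        = FreeGroup.invRev t₁ ++ ([(p.1, !p.2)] ++ [p] ++ t₂) := by simp
    rw [this, ← FreeGroup.mul_mk, ← FreeGroup.mul_mk, ← FreeGroup.mul_mk]
    have hmid : FreeGroup.mk [(p.1, !p.2)] * FreeGroup.mk [p] = 1 := by
      apply FreeGroup.reduce.exact (L₂ := [])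
      show FreeGroup.reduce ((p.1, !p.2) :: [(p.1, p.2)]) = FreeGroup.reduce []
      rw [FreeGroup.reduce.cons]
      simp [FreeGroup.reduce_singleton]
    rw [hmid]
    simp [FreeGroup.mul_mk]
  have hnorm : (x⁻¹ * y).norm ≤ t₁.length + t₂.length := by
    rw [hxy]
    calc (FreeGroup.mk (FreeGroup.invRev t₁ ++ t₂)).norm
        ≤ (FreeGroup.invRev t₁ ++ t₂).length := FreeGroup.norm_mk_le
      _ = t₁.length + t₂.length := by
          rw [List.length_append, FreeGroup.invRev_length]
  have hnx : x.norm = t₁.length + 1 := by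
    rw [FreeGroup.norm, h1, List.length_cons]
  have hny : y.norm = t₂.length + 1 := by
    rw [FreeGroup.norm, h2, List.length_cons]
  omega

theorem btw_iff_not_gp {x y : FreeGroup β} : WBtw x 1 y ↔ ¬ Gp x y := by
  constructor
  · intro hb hg
    have := norm_inv_mul_of_gp hg
    rw [WBtw, wdist, wdist, wdist] at hb
    simp only [mul_one, one_mul, inv_one, inv_inv] at hb this
    rw [FreeGroup.norm_inv_eq] at hb
    omega
  · intro hg
    have := norm_inv_mul_of_not_gp hg
    rw [WBtw, wdist, wdist, wdist]
    simp only [mul_one, one_mul, inv_one, inv_inv] at *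
    rw [FreeGroup.norm_inv_eq]
    omega

theorem gp_trans {a b c : FreeGroup β} (h1 : Gp a b) (h2 : Gp b c) : Gp a c := by
  obtain ⟨p, t₁, t₂, e1, e2⟩ := h1
  obtain ⟨q, s₁, s₂, f1, f2⟩ := h2
  rw [e2] at f1
  rw [List.cons.injEq] at f1
  exact ⟨p, t₁, s₂, e1, by rw [f2, ← f1.1]⟩

theorem btw_translate {g x m y : FreeGroup β} : WBtw (g * x) (g * m) (g * y) ↔ WBtw x m y := by
  unfold WBtw wdist
  simp [mul_assoc]

/-- The branching property of trees. -/
theorem btw_branch {a m c : FreeGroup β} (b : FreeGroup β) (h : WBtw a m c) :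
    WBtw a m b ∨ WBtw b m c := by
  by_contra hcon
  push_neg at hcon
  obtain ⟨h1, h2⟩ := hcon
  have tr : ∀ x y : FreeGroup β, WBtw x m y ↔ WBtw (m⁻¹ * x) 1 (m⁻¹ * y) := by
    intro x y
    rw [← btw_translate (g := m⁻¹), show m⁻¹ * m = 1 by simp]
  rw [tr, btw_iff_not_gp] at h h1 h2
  push_neg at h1 h2
  exact h (gp_trans h1 h2)

/-! ### Longest common prefix and medians -/

/-- Longest common prefix of two lists. -/
def lcp {γ : Type*} [DecidableEq γ] : List γ → List γ → List γ
  | a :: as, b :: bs => if a = b then a :: lcp as bs else []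
  | _, _ => []

theorem lcp_spec {γ : Type*} [DecidableEq γ] :
    ∀ L₁ L₂ : List γ, ∃ r₁ r₂ : List γ,
      L₁ = lcp L₁ L₂ ++ r₁ ∧ L₂ = lcp L₁ L₂ ++ r₂ ∧
      ∀ h t₁ t₂, r₁ = h :: t₁ → r₂ = h :: t₂ → False := by
  intro L₁
  induction L₁ with
  | nil =>
    intro L₂
    exact ⟨[], L₂, by cases L₂ <;> simp [lcp]⟩
  | cons a as ih =>
    intro L₂
    cases L₂ with
    | nil =>
      refine ⟨a :: as, [], by simp [lcp], by simp [lcp], ?_⟩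
      intro h t₁ t₂ _ h2
      simp at h2
    | cons b bs =>
      by_cases hab : a = b
      · subst hab
        obtain ⟨r₁, r₂, e1, e2, hmax⟩ := ih bs
        exact ⟨r₁, r₂, by simp [lcp, ← e1], by simp [lcp, ← e2], hmax⟩
      · refine ⟨a :: as, b :: bs, by simp [lcp, hab], by simp [lcp, hab], ?_⟩
        rintro h t₁ t₂ h1 h2
        rw [List.cons.injEq] at h1 h2
        exact hab (h1.1.trans h2.1.symm)

/-- Median data for the points `1, x, y` in the tree. -/
theorem median (x y : FreeGroup β) :
    ∃ m : FreeGroup β, ∃ t₁ t₂ : ℕ,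
      m.norm + t₁ = x.norm ∧ m.norm + t₂ = y.norm ∧
      wdist x y = t₁ + t₂ ∧ wdist m x = t₁ ∧ wdist m y = t₂ ∧
      WBtw x m y ∧ WBtw 1 m x := by
  obtain ⟨r₁, r₂, e1, e2, hmax⟩ := lcp_spec x.toWord y.toWord
  set c := lcp x.toWord y.toWord with hc
  have hredx := isRed_toWord x
  have hredy := isRed_toWord y
  have hredc : IsRed c := isRed_infix hredx ⟨[], r₁, by simpa using e1.symm⟩
  have hredr₁ : IsRed r₁ := isRed_infix hredx ⟨c, [], by simpa using e1.symm⟩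
  have hredr₂ : IsRed r₂ := isRed_infix hredy ⟨c, [], by simpa using e2.symm⟩
  refine ⟨FreeGroup.mk c, r₁.length, r₂.length, ?_⟩
  have hmx : (FreeGroup.mk c)⁻¹ * x = FreeGroup.mk r₁ := by
    have : x = FreeGroup.mk c * FreeGroup.mk r₁ := by
      rw [FreeGroup.mul_mk, ← e1, FreeGroup.mk_toWord]
    rw [this]; group
  have hmy : (FreeGroup.mk c)⁻¹ * y = FreeGroup.mk r₂ := by
    have : y = FreeGroup.mk c * FreeGroup.mk r₂ := by
      rw [FreeGroup.mul_mk, ← e2, FreeGroup.mk_toWord]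
    rw [this]; group
  have hdx : wdist (FreeGroup.mk c) x = r₁.length := by
    rw [wdist, hmx, norm_mk_of_isRed hredr₁]
  have hdy : wdist (FreeGroup.mk c) y = r₂.length := by
    rw [wdist, hmy, norm_mk_of_isRed hredr₂]
  have hnm : (FreeGroup.mk c).norm = c.length := norm_mk_of_isRed hredc
  have hnx : x.norm = c.length + r₁.length := by
    rw [FreeGroup.norm, e1, List.length_append]
  have hny : y.norm = c.length + r₂.length := by
    rw [FreeGroup.norm, e2, List.length_append]
  have hdxy : wdist x y = r₁.length + r₂.length := by
    have hng : ¬ Gp (FreeGroup.mk r₁) (FreeGroup.mk r₂) := by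
      rintro ⟨p, s₁, s₂, f1, f2⟩
      rw [toWord_mk_of_isRed hredr₁] at f1
      rw [toWord_mk_of_isRed hredr₂] at f2
      exact hmax p s₁ s₂ f1 f2
    have := norm_inv_mul_of_not_gp hng
    rw [norm_mk_of_isRed hredr₁, norm_mk_of_isRed hredr₂] at this
    have hxy : x⁻¹ * y = (FreeGroup.mk r₁)⁻¹ * FreeGroup.mk r₂ := by
      rw [← hmx, ← hmy]; group
    rw [wdist, hxy, this]
  refine ⟨by omega, by omega, hdxy, hdx, hdy, ?_, ?_⟩
  · rw [WBtw, wdist_symm x (FreeGroup.mk c), hdx, hdy, hdxy]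
  · rw [WBtw, hdx]
    have : wdist 1 (FreeGroup.mk c) = c.length := by
      rw [wdist, inv_one, one_mul, hnm]
    have h1x : wdist 1 x = x.norm := by rw [wdist, inv_one, one_mul]
    omega

/-! ### Climbing lemma -/

theorem climb (q : ℕ → FreeGroup β) (m z : FreeGroup β) (M : ℕ) :
    ∀ (k i₀ : ℕ), q (i₀ + k) = z →
      (∀ i, i₀ ≤ i → i < i₀ + k → wdist (q i) (q (i + 1)) ≤ M) →
      WBtw (q i₀) m z →
      ∃ i, i₀ ≤ i ∧ i ≤ i₀ + k ∧ wdist (q i) m ≤ M := by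
  intro k
  induction k with
  | zero =>
    intro i₀ hz _ hbase
    refine ⟨i₀, le_refl _, le_refl _, ?_⟩
    rw [Nat.add_zero] at hz
    have h0 : wdist (q i₀) z = 0 := by rw [hz, wdist_self]
    rw [WBtw, h0] at hbase
    omega
  | succ k ih =>
    intro i₀ hz hstep hbase
    by_cases hb : WBtw (q (i₀ + 1)) m z
    · obtain ⟨i, h1, h2, h3⟩ := ih (i₀ + 1)
        (by rw [show i₀ + 1 + k = i₀ + (k + 1) by omega]; exact hz)
        (fun i hi1 hi2 => hstep i (by omega) (by omega)) hb
      exact ⟨i, by omega, by omega, h3⟩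
    · rcases btw_branch (q (i₀ + 1)) hbase with h | h
      · refine ⟨i₀, le_refl _, by omega, ?_⟩
        have := hstep i₀ (le_refl _) (by omega)
        rw [WBtw] at h
        omega
      · exact absurd h hb

end BCaux

/-! ### Main theorem -/

open BCaux

private theorem bc_norm_letter {α β : Type*} [DecidableEq β]
    (φ : FreeGroup α →* FreeGroup β) (a : α) (b : Bool) :
    (φ (FreeGroup.mk [(a, b)])).norm = (φ (FreeGroup.of a)).norm := by
  cases b
  · have : FreeGroup.mk [(a, false)] = (FreeGroup.of a)⁻¹ := by
      rw [show FreeGroup.of a = FreeGroup.mk [(a, true)] from rfl, FreeGroup.inv_mk]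
      rfl
    rw [this, map_inv, FreeGroup.norm_inv_eq]
  · rfl

private theorem bc_lipschitz_list {α β : Type*} [DecidableEq β]
    (φ : FreeGroup α →* FreeGroup β) (M : ℕ)
    (hM : ∀ a : α, (φ (FreeGroup.of a)).norm ≤ M) :
    ∀ L : List (α × Bool), (φ (FreeGroup.mk L)).norm ≤ M * L.length := by
  intro L
  induction L with
  | nil =>
    simp [show FreeGroup.mk ([] : List (α × Bool)) = 1 from rfl]
  | cons h t ih =>
    have : FreeGroup.mk (h :: t) = FreeGroup.mk [h] * FreeGroup.mk t := by
      rw [FreeGroup.mul_mk]; rfl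
    rw [this, map_mul]
    calc (φ (FreeGroup.mk [h]) * φ (FreeGroup.mk t)).norm
        ≤ (φ (FreeGroup.mk [h])).norm + (φ (FreeGroup.mk t)).norm :=
          FreeGroup.norm_mul_le _ _
      _ ≤ M + M * t.length := by
          have := bc_norm_letter φ h.1 h.2
          have h1 : (φ (FreeGroup.mk [h])).norm ≤ M := by
            rw [show ((h.1, h.2) : α × Bool) = h from rfl] at this
            rw [this]; exact hM h.1
          omega
      _ = M * (h :: t).length := by rw [List.length_cons]; ring

/-- Bounded cancellation (Grayson–Thurston/Cooper): for an injective homomorphism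
`φ` between free groups with fixed bases (the domain of finite rank), there is a
constant `C` such that whenever the product `u * v` is reduced (lengths add), one has
`|φ(uv)| ≥ |φ(u)| + |φ(v)| − 2C`. -/
theorem bounded_cancellation {α β : Type*} [Fintype α] [DecidableEq α] [DecidableEq β]
    (φ : FreeGroup α →* FreeGroup β) (hφ : Function.Injective φ) :
    ∃ C : ℕ, ∀ u v : FreeGroup α,
      (u * v).norm = u.norm + v.norm →
      ((φ u).norm : ℤ) + ((φ v).norm : ℤ) - 2 * (C : ℤ) ≤ ((φ (u * v)).norm : ℤ) := by
  classical
  -- the Lipschitz constant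
  set M : ℕ := 1 + Finset.univ.sup (fun a : α => (φ (FreeGroup.of a)).norm) with hMdef
  have hM : ∀ a : α, (φ (FreeGroup.of a)).norm ≤ M := by
    intro a
    have h := Finset.le_sup (f := fun a : α => (φ (FreeGroup.of a)).norm) (Finset.mem_univ a)
    exact h.trans (Nat.le_add_left _ 1)
  have hLip := bc_lipschitz_list φ M hM
  -- letters used by the image
  set B : Finset β :=
    Finset.univ.biUnion (fun a : α => ((φ (FreeGroup.of a)).toWord.map Prod.fst).toFinset)
    with hBdef
  have hletters : ∀ f : FreeGroup α, ∀ p ∈ (φ f).toWord, p.1 ∈ B := by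
    intro f
    induction f using FreeGroup.induction_on with
    | C1 => intro p hp; rw [map_one, FreeGroup.toWord_one] at hp; cases hp
    | of a =>
      intro p hp
      rw [hBdef]
      refine Finset.mem_biUnion.2 ⟨a, Finset.mem_univ a, ?_⟩
      rw [List.mem_toFinset]
      exact List.mem_map.2 ⟨p, hp, rfl⟩
    | inv_of a ih =>
      intro p hp
      rw [map_inv, FreeGroup.toWord_inv] at hp
      unfold FreeGroup.invRev at hp
      rw [List.mem_reverse, List.mem_map] at hp
      obtain ⟨q, hq, rfl⟩ := hp
      exact ih (q.1, q.2) (by simpa using hq)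
    | mul x y ihx ihy =>
      intro p hp
      rw [map_mul] at hp
      have := (FreeGroup.toWord_mul_sublist (φ x) (φ y)).mem hp
      rcases List.mem_append.1 this with h | h
      · exact ihx p h
      · exact ihy p h
  -- properness: the set of elements with short image is finite
  have hSfin : {f : FreeGroup α | (φ f).norm ≤ 2 * M}.Finite := by
    set e : List ((↥B) × Bool) → List (β × Bool) :=
      List.map (fun pb => (pb.1.1, pb.2)) with hedef
    have hbig : (e '' {L | L.length ≤ 2 * M}).Finite :=
      (List.finite_length_le ((↥B) × Bool) (2 * M)).image e
    apply Set.Finite.of_finite_image (f := fun f => (φ f).toWord)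
    · apply hbig.subset
      rintro L ⟨f, hf, rfl⟩
      refine ⟨(φ f).toWord.pmap (fun (p : β × Bool) (hp : p.1 ∈ B) => ((⟨p.1, hp⟩ : ↥B), p.2)) (hletters f),
        ?_, ?_⟩
      · simpa [FreeGroup.norm] using hf
      · rw [hedef]
        rw [List.map_pmap]
        simp
    · intro f₁ _ f₂ _ h
      exact hφ (FreeGroup.toWord_injective h)
  -- the properness constant
  obtain ⟨A, hA⟩ : ∃ A : ℕ, ∀ f : FreeGroup α, (φ f).norm ≤ 2 * M → f.norm ≤ A := by
    obtain ⟨A, hA⟩ := (hSfin.image FreeGroup.norm).bddAbove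
    exact ⟨A, fun f hf => hA ⟨f, hf, rfl⟩⟩
  refine ⟨M + M * A, ?_⟩
  intro u v huv
  -- the concatenated reduced word
  set W : List (α × Bool) := u.toWord ++ v.toWord with hWdef
  have huvw : (u * v).toWord = W := by
    refine (FreeGroup.toWord_mul_sublist u v).eq_of_length ?_
    rw [List.length_append]
    exact huv
  have hredW : IsRed W := huvw ▸ isRed_toWord (u * v)
  set n : ℕ := W.length with hndef
  set lu : ℕ := u.toWord.length with hludef
  have hlun : lu ≤ n := by rw [hndef, hWdef, List.length_append]; omega
  set p : ℕ → FreeGroup α := fun i => FreeGroup.mk (W.take i) with hpdef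
  set q : ℕ → FreeGroup β := fun i => φ (p i) with hqdef
  have hseg : ∀ i j, i ≤ j → (p i)⁻¹ * p j = FreeGroup.mk ((W.take j).drop i) := by
    intro i j hij
    have hW : W.take i ++ (W.take j).drop i = W.take j := by
      conv_lhs => rw [show W.take i = (W.take j).take i by
        rw [List.take_take, min_eq_left hij]]
      exact List.take_append_drop i (W.take j)
    have : p i * FreeGroup.mk ((W.take j).drop i) = p j := by
      rw [hpdef, FreeGroup.mul_mk, hW]
    rw [← this]; group
  have hsegred : ∀ i j, IsRed ((W.take j).drop i) := fun i j =>
    isRed_infix hredW (((W.take j).drop_suffix i).isInfix.trans (W.take_prefix j).isInfix)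
  have hsegnorm : ∀ i j, i ≤ j → j ≤ n → ((p i)⁻¹ * p j).norm = j - i := by
    intro i j hij hjn
    rw [hseg i j hij, norm_mk_of_isRed (hsegred i j), List.length_drop, List.length_take]
    rw [hndef] at hjn
    omega
  have hqd : ∀ i j, i ≤ j → wdist (q i) (q j) ≤ M * (j - i) := by
    intro i j hij
    rw [wdist, hqdef]
    simp only
    rw [← map_inv, ← map_mul, hseg i j hij]
    calc (φ (FreeGroup.mk ((W.take j).drop i))).norm
        ≤ M * ((W.take j).drop i).length := hLip _
      _ ≤ M * (j - i) := by
          have : ((W.take j).drop i).length ≤ j - i := by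
            rw [List.length_drop, List.length_take]; omega
          exact Nat.mul_le_mul_left M this
  -- median of 1, φ u, φ (u * v)
  obtain ⟨m, t₁, t₂, hmx, hmy, hdxy, hdmx, hdmy, hbtwXmY, hbtw1mX⟩ :=
    median (φ u) (φ (u * v))
  have hphiv : (φ u)⁻¹ * φ (u * v) = φ v := by
    rw [← map_inv, ← map_mul]
    congr 1
    group
  have hkey : (φ u).norm + (φ v).norm = (φ (u * v)).norm + 2 * t₁ := by
    have : wdist (φ u) (φ (u * v)) = (φ v).norm := by rw [wdist, hphiv]
    omega
  -- endpoints of the path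
  have hp0 : q 0 = 1 := by
    rw [hqdef]; simp only
    rw [hpdef]; simp only
    rw [List.take_zero, show FreeGroup.mk ([] : List (α × Bool)) = 1 from rfl, map_one]
  have hplu : q lu = φ u := by
    rw [hqdef]; simp only
    rw [hpdef]; simp only
    rw [hludef, hWdef, List.take_left, FreeGroup.mk_toWord]
  have hpn : q n = φ (u * v) := by
    rw [hqdef]; simp only
    rw [hpdef]; simp only
    rw [hndef, List.take_length, ← huvw, FreeGroup.mk_toWord]
  have hstep : ∀ i, i < n → wdist (q i) (q (i + 1)) ≤ M := by
    intro i _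
    have := hqd i (i + 1) (by omega)
    simpa using this
  -- climb on the left
  obtain ⟨i, hi0, hilu, hiM⟩ := climb q m (φ u) M lu 0
    (by rw [Nat.zero_add]; exact hplu)
    (fun i _ hi2 => hstep i (by omega))
    (by rw [hp0]; exact hbtw1mX)
  rw [Nat.zero_add] at hilu
  -- climb on the right
  obtain ⟨j, hjlu, hjn, hjM⟩ := climb q m (φ (u * v)) M (n - lu) lu
    (by rw [show lu + (n - lu) = n by omega]; exact hpn)
    (fun i _ hi2 => hstep i (by omega))
    (by rw [hplu]; exact hbtwXmY)
  rw [show lu + (n - lu) = n by omega] at hjn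
  -- the two closest points are close to each other
  have hij : i ≤ j := le_trans hilu hjlu
  have hdij : wdist (q i) (q j) ≤ 2 * M := by
    calc wdist (q i) (q j) ≤ wdist (q i) m + wdist m (q j) := wdist_triangle _ _ _
      _ ≤ M + M := by rw [wdist_symm m (q j)]; omega
      _ = 2 * M := by ring
  have hji : j - i ≤ A := by
    have h1 : (φ ((p i)⁻¹ * p j)).norm ≤ 2 * M := by
      rw [map_mul, map_inv]
      exact hdij
    have := hA _ h1
    rw [hsegnorm i j hij hjn] at this
    exact this
  -- bound the cancellation
  have ht₁ : t₁ ≤ M + M * A := by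
    have h1 : wdist m (φ u) ≤ wdist m (q i) + wdist (q i) (φ u) := wdist_triangle _ _ _
    have h2 : wdist (q i) (φ u) ≤ M * (lu - i) := by
      rw [← hplu]; exact hqd i lu hilu
    have h3 : M * (lu - i) ≤ M * A := by
      refine Nat.mul_le_mul_left M ?_
      omega
    rw [hdmx, wdist_symm m (q i)] at h1
    omega
  omega
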